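/- Let E be a finite-dimensional real vector space, Q a quadratic form on E, and A a linear endomorphism of E such that x ↦ DQ(x)[Ax] is negative for every x ≠ 0. Then Q is nondegenerate, and A is hyperbolic: no eigenvalue of the complexification of A has zero real part. -/

import Mathlib

open TensorProduct

noncomputable def reM (E : Type*) [AddCommGroup E] [Module ℝ E] : ℂ ⊗[ℝ] E →ₗ[ℝ] E :=
  TensorProduct.lift ((LinearMap.lsmul ℝ E).comp Complex.reLm)

noncomputable def imM (E : Type*) [AddCommGroup E] [Module ℝ E] : ℂ ⊗[ℝ] E →ₗ[ℝ] E :=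
  TensorProduct.lift ((LinearMap.lsmul ℝ E).comp Complex.imLm)

theorem reM_tmul (E : Type*) [AddCommGroup E] [Module ℝ E] (c : ℂ) (x : E) :
    reM E (c ⊗ₜ x) = c.re • x := rfl

theorem imM_tmul (E : Type*) [AddCommGroup E] [Module ℝ E] (c : ℂ) (x : E) :
    imM E (c ⊗ₜ x) = c.im • x := rfl

theorem decomp (E : Type*) [AddCommGroup E] [Module ℝ E] (z : ℂ ⊗[ℝ] E) :
    (1 : ℂ) ⊗ₜ reM E z + Complex.I ⊗ₜ imM E z = z := by
  induction z using TensorProduct.induction_on with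
  | zero => simp
  | tmul c x =>
      rw [reM_tmul, imM_tmul, tmul_smul, tmul_smul, smul_tmul', smul_tmul',
        ← add_tmul]
      congr 1
      simp [Complex.ext_iff]
  | add a b ha hb =>
      rw [map_add, map_add, tmul_add, tmul_add]
      rw [add_add_add_comm, ha, hb]

theorem reM_baseChange (E : Type*) [AddCommGroup E] [Module ℝ E] (A : E →ₗ[ℝ] E)
    (z : ℂ ⊗[ℝ] E) : reM E (LinearMap.baseChange ℂ A z) = A (reM E z) := by
  induction z using TensorProduct.induction_on with
  | zero => simp
  | tmul c x => simp [reM_tmul]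
  | add a b ha hb => simp [ha, hb]

theorem imM_baseChange (E : Type*) [AddCommGroup E] [Module ℝ E] (A : E →ₗ[ℝ] E)
    (z : ℂ ⊗[ℝ] E) : imM E (LinearMap.baseChange ℂ A z) = A (imM E z) := by
  induction z using TensorProduct.induction_on with
  | zero => simp
  | tmul c x => simp [imM_tmul]
  | add a b ha hb => simp [ha, hb]

theorem reM_smul (E : Type*) [AddCommGroup E] [Module ℝ E] (μ : ℂ) (z : ℂ ⊗[ℝ] E) :
    reM E (μ • z) = μ.re • reM E z - μ.im • imM E z := by
  induction z using TensorProduct.induction_on with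
  | zero => simp
  | tmul c x =>
      rw [smul_tmul', reM_tmul, reM_tmul, imM_tmul, smul_eq_mul, Complex.mul_re,
        sub_smul, smul_smul, smul_smul]
  | add a b ha hb =>
      rw [smul_add, map_add, ha, hb, map_add, map_add, smul_add, smul_add]; abel

theorem imM_smul (E : Type*) [AddCommGroup E] [Module ℝ E] (μ : ℂ) (z : ℂ ⊗[ℝ] E) :
    imM E (μ • z) = μ.re • imM E z + μ.im • reM E z := by
  induction z using TensorProduct.induction_on with
  | zero => simp
  | tmul c x =>
      rw [smul_tmul', imM_tmul, imM_tmul, reM_tmul, smul_eq_mul, Complex.mul_im,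
        add_smul, smul_smul, smul_smul, add_comm]
  | add a b ha hb =>
      rw [smul_add, map_add, ha, hb, map_add, map_add, smul_add, smul_add]; abel



/-- Hyperbolicity implicit in conditions 3) and 4) of Section 2.1: if `Q` is a
quadratic form on a finite-dimensional real vector space and `A` is a linear
endomorphism with `DQ(x)[Ax] < 0` for every `x ≠ 0` (where
`DQ(x)[v] = polar Q (x,v)`), then `Q` is nondegenerate and `A` is hyperbolic:
no eigenvalue of the complexification of `A` has zero real part. -/
theorem pseudo_gradient_linear_hyperbolic (E : Type*) [AddCommGroup E] [Module ℝ E]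
    [FiniteDimensional ℝ E] (Q : QuadraticForm ℝ E) (A : E →ₗ[ℝ] E)
    (hneg : ∀ x : E, x ≠ 0 → Q.polarBilin x (A x) < 0) :
    LinearMap.BilinForm.Nondegenerate Q.polarBilin ∧
      ∀ μ : ℂ, Module.End.HasEigenvalue (LinearMap.baseChange ℂ A) μ → μ.re ≠ 0 := by

  have hle : ∀ x : E, Q.polarBilin x (A x) ≤ 0 := by
    intro x
    rcases eq_or_ne x 0 with rfl | hx
    · simp
    · exact (hneg x hx).le
  constructor
  · constructor
    · intro x hx
      by_contra h
      exact absurd (hx (A x)) (hneg x h).ne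
    · intro x hx
      by_contra h
      have h2 := hx (A x)
      rw [show Q.polarBilin (A x) x = Q.polarBilin x (A x) from QuadraticMap.polar_comm Q _ _] at h2
      exact absurd h2 (hneg x h).ne
  · intro μ hμ hre
    obtain ⟨z, hz⟩ := hμ.exists_hasEigenvector
    have heq : LinearMap.baseChange ℂ A z = μ • z := hz.apply_eq_smul
    set x := reM E z with hxdef
    set y := imM E z with hydef
    have hAx : A x = - μ.im • y := by
      rw [hxdef, ← reM_baseChange, heq, reM_smul, hre, zero_smul, zero_sub, neg_smul]
    have hAy : A y = μ.im • x := by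
      rw [hydef, ← imM_baseChange, heq, imM_smul, hre, zero_smul, zero_add]
    have hsum : Q.polarBilin x (A x) + Q.polarBilin y (A y) = 0 := by
      rw [hAx, hAy]
      simp only [map_neg, map_smul, smul_eq_mul]
      have : (Q.polarBilin x) y = (Q.polarBilin y) x := QuadraticMap.polar_comm Q x y
      rw [this]; ring
    have hne : x ≠ 0 ∨ y ≠ 0 := by
      by_contra h
      push_neg at h
      apply hz.right
      rw [← decomp E z, ← hxdef, ← hydef, h.1, h.2, tmul_zero, tmul_zero, add_zero]
    have hlt : Q.polarBilin x (A x) + Q.polarBilin y (A y) < 0 := by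
      rcases hne with h | h
      · exact add_neg_of_neg_of_nonpos (hneg x h) (hle y)
      · exact add_neg_of_nonpos_of_neg (hle x) (hneg y h)
    exact hlt.ne hsum
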